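/- Let k, l ≥ 2 be integers, and let t = a^k b^l (the word consisting of k copies of a letter a followed by l copies of a distinct letter b). Then every finite simple graph is t-representable. -/

import Mathlib

variable {V : Type*}

/-- The restriction of a word `w` to the letters `x` and `y`. -/
def restrictWord [DecidableEq V] (w : List V) (x y : V) : List V :=
  w.filter fun z => decide (z = x ∨ z = y)

/-- A pattern on two distinct letters `a`, `b` is encoded as a `List Bool`,
where `false` stands for `a` and `true` stands for `b`.  `patternWord t c d` is the word
obtained from the pattern `t` by the substitution `a ↦ c`, `b ↦ d`. -/
def patternWord {α : Type*} (t : List Bool) (c d : α) : List α :=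
  t.map fun b => if b then d else c

/-- `u` contains the pattern `t`: some contiguous factor of `u` is isomorphic to `t`,
i.e. is the image of `t` under an injective substitution of the two letters. -/
def ContainsPattern {α : Type*} (t : List Bool) (u : List α) : Prop :=
  ∃ c d : α, c ≠ d ∧ patternWord t c d <:+: u

/-- `w` `t`-represents the simple graph `G`: every vertex occurs in `w`, and two distinct
vertices `x`, `y` are adjacent iff the restriction of `w` to `{x, y}` avoids the pattern `t`. -/
def TRepresents [DecidableEq V] (t : List Bool) (G : SimpleGraph V) (w : List V) : Prop :=
  (∀ v : V, v ∈ w) ∧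
  ∀ x y : V, x ≠ y → (G.Adj x y ↔ ¬ ContainsPattern t (restrictWord w x y))

/-- `G` is `t`-representable if some word `t`-represents it. -/
def TRepresentable [DecidableEq V] (t : List Bool) (G : SimpleGraph V) : Prop :=
  ∃ w : List V, TRepresents t G w

namespace AkblAux

open List

/-- An infix of an append is an infix of one part or splits across the junction. -/
theorem infix_split {α : Type*} {v A B : List α} (h : v <:+: A ++ B) :
    v <:+: A ∨ v <:+: B ∨
      ∃ v1 v2, v1 ≠ [] ∧ v2 ≠ [] ∧ v = v1 ++ v2 ∧ v1 <:+ A ∧ v2 <+: B := by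
  obtain ⟨p, t, hpt⟩ := h
  have hlen := congrArg List.length hpt
  simp only [length_append] at hlen
  by_cases h1 : p.length + v.length ≤ A.length
  · left
    have hA : A = (p ++ v ++ t).take A.length := by rw [hpt, take_left]
    rw [take_append, take_append,
      take_of_length_le (by omega), take_of_length_le (by omega)] at hA
    exact ⟨p, _, hA.symm⟩
  · by_cases h2 : A.length ≤ p.length
    · right; left
      have hB : B = (p ++ v ++ t).drop A.length := by rw [hpt, drop_left]
      rw [drop_append, drop_append] at hB
      have e1 : A.length - p.length = 0 := by omega
      have e2 : A.length - (p ++ v).length = 0 := by simp only [length_append]; omega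
      rw [e1, e2, drop_zero, drop_zero] at hB
      exact ⟨_, _, hB.symm⟩
    · right; right
      push_neg at h1 h2
      refine ⟨v.take (A.length - p.length), v.drop (A.length - p.length), ?_, ?_,
        (take_append_drop _ _).symm, ?_, ?_⟩
      · have hl : (v.take (A.length - p.length)).length = A.length - p.length := by
          rw [length_take]; omega
        intro hnil; rw [hnil] at hl; simp at hl; omega
      · have hl : (v.drop (A.length - p.length)).length = v.length - (A.length - p.length) := by
          rw [length_drop]
        intro hnil; rw [hnil] at hl; simp at hl; omega
      · have hA : A = (p ++ v ++ t).take A.length := by rw [hpt, take_left]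
        rw [take_append, take_append,
          take_of_length_le (by omega)] at hA
        have e2 : A.length - (p ++ v).length = 0 := by simp only [length_append]; omega
        rw [e2, take_zero, append_nil] at hA
        exact ⟨p, hA.symm⟩
      · have hB : B = (p ++ v ++ t).drop A.length := by rw [hpt, drop_left]
        rw [drop_append, drop_append,
          drop_of_length_le (by omega)] at hB
        have e2 : A.length - (p ++ v).length = 0 := by simp only [length_append]; omega
        rw [e2, drop_zero, nil_append] at hB
        exact ⟨t, hB.symm⟩

/-- A short prefix of an append is a prefix of the first part. -/
theorem prefix_trunc {α : Type*} {v A B : List α} (h : v <+: A ++ B)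
    (hlen : v.length ≤ A.length) : v <+: A := by
  have hv : v = (A ++ B).take v.length := by
    obtain ⟨t, ht⟩ := h
    rw [← ht, take_append, take_of_length_le le_rfl]
    simp
  rw [take_append_of_le_length hlen] at hv
  rw [hv]; exact take_prefix _ _

/-- Splitting a four-element list into two nonempty parts. -/
lemma split4 {α : Type*} {v1 v2 : List α} {b0 b1 b2 b3 : α}
    (h : v1 ++ v2 = [b0, b1, b2, b3]) (h1 : v1 ≠ []) (h2 : v2 ≠ []) :
    (v1 = [b0] ∧ v2 = [b1, b2, b3]) ∨ (v1 = [b0, b1] ∧ v2 = [b2, b3]) ∨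
      (v1 = [b0, b1, b2] ∧ v2 = [b3]) := by
  rcases v1 with _ | ⟨a1, _ | ⟨a2, _ | ⟨a3, _ | ⟨a4, v1⟩⟩⟩⟩
  · exact absurd rfl h1
  · left; simp_all
  · right; left; simp_all
  · right; right; simp_all
  · exfalso
    have hl := congrArg List.length h
    simp only [List.length_append, List.length_cons, List.length_nil] at hl
    have h2l : 1 ≤ v2.length := length_pos_iff.mpr h2
    omega

lemma not_infix_q {o : Bool} {v : List Bool}
    (hv : v = [false, false, true, true] ∨ v = [true, true, false, false]) :
    ¬ v <:+: [o, !o, o, !o] := by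
  cases o <;> rcases hv with rfl | rfl <;> decide

/-- Case analysis for a length-3 suffix of `q ++ replicate e c`. -/
lemma suffix3_cases {o c : Bool} {e : ℕ} {v1 : List Bool} (hlen : v1.length = 3)
    (h : v1 <:+ [o, !o, o, !o] ++ List.replicate e c) :
    v1 = List.replicate 3 c ∨ (e = 0 ∧ v1 = [!o, o, !o]) ∨ (e = 1 ∧ v1 = [o, !o, c]) ∨
      (e = 2 ∧ v1 = [!o, c, c]) := by
  have hd := suffix_iff_eq_drop.mp h
  have hL : ([o, !o, o, !o] ++ List.replicate e c).length = 4 + e := by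
    simp only [List.length_append, List.length_cons, List.length_nil, List.length_replicate]
  rw [hL, hlen] at hd
  by_cases he : 3 ≤ e
  · left
    have e4 : 4 + e - 3 = ([o, !o, o, !o] : List Bool).length + (e - 3) := by
      simp only [length_cons, length_nil]; omega
    rw [e4, drop_length_add_append, drop_replicate] at hd
    have e5 : e - (e - 3) = 3 := by omega
    rw [e5] at hd; exact hd
  · interval_cases e <;> simp_all [List.replicate_succ]

/-- No bad factor inside `q ++ run`. -/
lemma not_infix_q_run {o c : Bool} {e : ℕ} {v : List Bool}
    (hv : v = [false, false, true, true] ∨ v = [true, true, false, false]) :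
    ¬ v <:+: ([o, !o, o, !o] ++ List.replicate e c) := by
  intro h
  rcases infix_split h with h | h | ⟨v1, v2, h1, h2, hveq, hs, hp⟩
  · exact not_infix_q hv h
  · have hmem : ∀ x ∈ v, x = c := fun x hx => eq_of_mem_replicate (h.sublist.subset hx)
    rcases hv with rfl | rfl <;> cases c <;> simp_all
  · have hv2 : ∀ x ∈ v2, x = c := fun x hx => eq_of_mem_replicate (hp.sublist.subset hx)
    rcases hv with rfl | rfl <;>
      rcases split4 hveq.symm h1 h2 with ⟨rfl, rfl⟩ | ⟨rfl, rfl⟩ | ⟨rfl, rfl⟩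
    · have hF := hv2 false (by simp)
      have hT := hv2 true (by simp)
      exact absurd (hF.trans hT.symm) (by decide)
    · cases o <;> exact absurd hs (by decide)
    · cases o <;> exact absurd hs (by decide)
    · have hF := hv2 false (by simp)
      have hT := hv2 true (by simp)
      exact absurd (hF.trans hT.symm) (by decide)
    · cases o <;> exact absurd hs (by decide)
    · cases o <;> exact absurd hs (by decide)

/-- The main combinatorial lemma: the word `q ++ r₁ ++ q ++ r₂ ++ ⋯ ++ q`, where
`q = [o,!o,o,!o]` and each `rᵢ` is constant, contains no factor `ccdd` with `c ≠ d`. -/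
theorem main_bool (o : Bool) {v : List Bool}
    (hv : v = [false, false, true, true] ∨ v = [true, true, false, false]) :
    ∀ L : List (List Bool), (∀ r ∈ L, ∃ e c, r = List.replicate e c) →
    ¬ v <:+: ([o, !o, o, !o] ++ (L.map (· ++ [o, !o, o, !o])).flatten)
  | [] => by
    intro _ h
    rw [map_nil, flatten_nil, append_nil] at h
    exact not_infix_q hv h
  | r :: L => by
    intro hL h
    obtain ⟨e, c, rfl⟩ := hL r mem_cons_self
    have hgrp : [o, !o, o, !o] ++ (((List.replicate e c :: L).map (· ++ [o, !o, o, !o])).flatten)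
        = ([o, !o, o, !o] ++ List.replicate e c)
          ++ ([o, !o, o, !o] ++ (L.map (· ++ [o, !o, o, !o])).flatten) := by
      simp [flatten_cons]
    rw [hgrp] at h
    rcases infix_split h with h | h | ⟨v1, v2, h1, h2, hveq, hs, hp⟩
    · exact not_infix_q_run hv h
    · exact main_bool o hv L (fun r hr => hL r (mem_cons_of_mem _ hr)) h
    · have hv4 : v.length = 4 := by rcases hv with rfl | rfl <;> rfl
      have hlen := congrArg List.length hveq
      simp only [length_append] at hlen
      have h1l : 1 ≤ v1.length := length_pos_iff.mpr h1
      have h2l : 1 ≤ v2.length := length_pos_iff.mpr h2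
      have hp' : v2 <+: [o, !o, o, !o] := prefix_trunc hp (by simp; omega)
      have hs3 : v1.length = 3 ∨ v1.length < 3 := by omega
      rcases hv with rfl | rfl <;>
        rcases split4 hveq.symm h1 h2 with ⟨rfl, rfl⟩ | ⟨rfl, rfl⟩ | ⟨rfl, rfl⟩
      · cases o <;> exact absurd hp' (by decide)
      · cases o <;> exact absurd hp' (by decide)
      · have ho : o = true := by
          cases o
          · exact absurd hp' (by decide)
          · rfl
        subst ho
        rcases suffix3_cases (by rfl) hs with h' | ⟨_, h'⟩ | ⟨_, h'⟩ | ⟨_, h'⟩ <;>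
          revert h' <;> cases c <;> decide
      · cases o <;> exact absurd hp' (by decide)
      · cases o <;> exact absurd hp' (by decide)
      · have ho : o = false := by
          cases o
          · rfl
          · exact absurd hp' (by decide)
        subst ho
        rcases suffix3_cases (by rfl) hs with h' | ⟨_, h'⟩ | ⟨_, h'⟩ | ⟨_, h'⟩ <;>
          revert h' <;> cases c <;> decide

section Filter

variable {α : Type*} [DecidableEq α]

lemma filter_pair_nil {x y : α} {l : List α} (hx : x ∉ l) (hy : y ∉ l) :
    l.filter (fun z => decide (z = x ∨ z = y)) = [] := by
  rw [filter_eq_nil_iff]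
  intro a ha
  simp only [decide_eq_true_eq]
  rintro (rfl | rfl)
  · exact hx ha
  · exact hy ha

lemma filter_pair_singleY {x y : α} {l : List α} (hnd : l.Nodup) (hx : x ∉ l) (hy : y ∈ l) :
    l.filter (fun z => decide (z = x ∨ z = y)) = [y] := by
  induction l with
  | nil => simp at hy
  | cons a l ih =>
    rcases nodup_cons.mp hnd with ⟨ha, hnd'⟩
    have hxl : x ∉ l := fun h => hx (mem_cons_of_mem _ h)
    by_cases hay : a = y
    · subst hay
      rw [filter_cons_of_pos (by simp)]
      rw [filter_pair_nil hxl ha]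
    · have hyl : y ∈ l := by
        rcases mem_cons.mp hy with h | h
        · exact absurd h.symm hay
        · exact h
      rw [filter_cons_of_neg (by simp; exact ⟨fun h => hx (h ▸ mem_cons_self), hay⟩)]
      exact ih hnd' hxl hyl

lemma filter_pair_singleX {x y : α} {l : List α} (hnd : l.Nodup) (hx : x ∈ l) (hy : y ∉ l) :
    l.filter (fun z => decide (z = x ∨ z = y)) = [x] := by
  induction l with
  | nil => simp at hx
  | cons a l ih =>
    rcases nodup_cons.mp hnd with ⟨ha, hnd'⟩
    have hyl : y ∉ l := fun h => hy (mem_cons_of_mem _ h)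
    by_cases hax : a = x
    · subst hax
      rw [filter_cons_of_pos (by simp)]
      rw [filter_pair_nil ha hyl]
    · have hxl : x ∈ l := by
        rcases mem_cons.mp hx with h | h
        · exact absurd h.symm hax
        · exact h
      rw [filter_cons_of_neg (by simp; exact ⟨hax, fun h => hy (h ▸ mem_cons_self)⟩)]
      exact ih hnd' hxl hyl

lemma filter_pair {x y : α} {l : List α} (hnd : l.Nodup) (hx : x ∈ l) (hy : y ∈ l)
    (hxy : x ≠ y) :
    l.filter (fun z => decide (z = x ∨ z = y)) = [x, y] ∨
      l.filter (fun z => decide (z = x ∨ z = y)) = [y, x] := by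
  induction l with
  | nil => simp at hx
  | cons a l ih =>
    rcases nodup_cons.mp hnd with ⟨ha, hnd'⟩
    by_cases hax : a = x
    · subst hax
      left
      rw [filter_cons_of_pos (by simp)]
      have hyl : y ∈ l := by
        rcases mem_cons.mp hy with h | h
        · exact absurd h.symm hxy
        · exact h
      rw [filter_pair_singleY hnd' ha hyl]
    · by_cases hay : a = y
      · subst hay
        right
        rw [filter_cons_of_pos (by simp)]
        have hxl : x ∈ l := by
          rcases mem_cons.mp hx with h | h
          · exact absurd h hxy
          · exact h
        rw [filter_pair_singleX hnd' hxl ha]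
      · have hxl : x ∈ l := by
          rcases mem_cons.mp hx with h | h
          · exact absurd h.symm hax
          · exact h
        have hyl : y ∈ l := by
          rcases mem_cons.mp hy with h | h
          · exact absurd h.symm hay
          · exact h
        rw [filter_cons_of_neg (by simp; exact ⟨hax, hay⟩)]
        exact ih hnd' hxl hyl

end Filter

end AkblAux

/-- For integers `k, l ≥ 2` and the pattern `t = aᵏ bˡ`,
every finite simple graph is `t`-representable. -/
theorem all_graphs_akbl_representable (k l : ℕ) (hk : 2 ≤ k) (hl : 2 ≤ l)
    {V : Type*} [Fintype V] [DecidableEq V] (G : SimpleGraph V) :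
    TRepresentable (List.replicate k false ++ List.replicate l true) G := by
  classical
  open List in
  obtain ⟨P, hPnodup, hPmem⟩ : ∃ P : List V, P.Nodup ∧ ∀ v : V, v ∈ P :=
    ⟨(Finset.univ : Finset V).toList, Finset.nodup_toList _,
      fun v => by simp [Finset.mem_toList]⟩
  set blk : V × V → List V := fun p =>
    if p.1 ≠ p.2 ∧ ¬ G.Adj p.1 p.2 then List.replicate k p.1 ++ List.replicate l p.2 else []
    with hblk
  set S : List V := P ++ P with hS
  set w : List V := S ++ ((P.product P).map (fun p => blk p ++ S)).flatten with hw
  refine ⟨w, fun v => ?_, fun x y hxy => ?_⟩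
  · rw [hw, hS]
    exact List.mem_append_left _ (List.mem_append_left _ (hPmem v))
  have hpw : ∀ c d : V, patternWord (List.replicate k false ++ List.replicate l true) c d
      = List.replicate k c ++ List.replicate l d := by
    intro c d; simp [patternWord]
  constructor
  · -- adjacent: the restriction avoids the pattern
    intro hadj hcon
    obtain ⟨c, d, hcd, hinf⟩ := hcon
    rw [hpw] at hinf
    have h4 : [c, c, d, d] <:+: List.replicate k c ++ List.replicate l d := by
      refine ⟨List.replicate (k - 2) c, List.replicate (l - 2) d, ?_⟩
      have hk2 : List.replicate (k - 2) c ++ [c, c] = List.replicate k c := by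
        rw [show [c, c] = List.replicate 2 c from rfl, ← List.replicate_add]
        congr 1; omega
      have hl2 : [d, d] ++ List.replicate (l - 2) d = List.replicate l d := by
        rw [show [d, d] = List.replicate 2 d from rfl, ← List.replicate_add]
        congr 1; omega
      calc List.replicate (k - 2) c ++ [c, c, d, d] ++ List.replicate (l - 2) d
          = (List.replicate (k - 2) c ++ [c, c]) ++ ([d, d] ++ List.replicate (l - 2) d) := by
            simp
        _ = List.replicate k c ++ List.replicate l d := by rw [hk2, hl2]
    have h4R : [c, c, d, d] <:+: restrictWord w x y := h4.trans hinf
    have hmemc : c = x ∨ c = y := by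
      have hc : c ∈ restrictWord w x y := h4R.sublist.subset (by simp)
      have := (List.mem_filter.mp hc).2
      simpa using this
    have hmemd : d = x ∨ d = y := by
      have hd : d ∈ restrictWord w x y := h4R.sublist.subset (by simp)
      have := (List.mem_filter.mp hd).2
      simpa using this
    set g : V → Bool := fun z => decide (z = y) with hg
    have hgx : g x = false := by simp [hg, hxy]
    have hgy : g y = true := by simp [hg]
    have hgcd : g c ≠ g d := by
      rcases hmemc with rfl | rfl <;> rcases hmemd with rfl | rfl <;> simp_all
    have hvimg : [g c, g c, g d, g d] = [false, false, true, true] ∨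
        [g c, g c, g d, g d] = [true, true, false, false] := by
      cases hc' : g c <;> cases hd' : g d <;> simp_all
    have hblkrep : ∀ p : V × V, ∃ (e : ℕ) (c' : V),
        restrictWord (blk p) x y = List.replicate e c' := by
      rintro ⟨u, u'⟩
      rw [hblk]
      by_cases hpc : u ≠ u' ∧ ¬ G.Adj u u'
      · simp only [if_pos hpc]
        rw [restrictWord, List.filter_append, List.filter_replicate, List.filter_replicate]
        by_cases h1 : u = x ∨ u = y <;> by_cases h2 : u' = x ∨ u' = y
        · exfalso
          rcases h1 with rfl | rfl <;> rcases h2 with rfl | rfl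
          · exact hpc.1 rfl
          · exact hpc.2 hadj
          · exact hpc.2 hadj.symm
          · exact hpc.1 rfl
        · rw [if_pos (by simpa using h1), if_neg (by simpa using h2), List.append_nil]
          exact ⟨k, u, rfl⟩
        · rw [if_neg (by simpa using h1), if_pos (by simpa using h2), List.nil_append]
          exact ⟨l, u', rfl⟩
        · rw [if_neg (by simpa using h1), if_neg (by simpa using h2)]
          exact ⟨0, x, rfl⟩
      · simp only [if_neg hpc]
        exact ⟨0, x, rfl⟩
    have himg := h4R.map g
    have hLrep : ∀ r ∈ (P.product P).map (fun p => (restrictWord (blk p) x y).map g),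
        ∃ e c'', r = List.replicate e c'' := by
      intro r hr
      obtain ⟨p, _, rfl⟩ := List.mem_map.mp hr
      obtain ⟨e, c', h'⟩ := hblkrep p
      exact ⟨e, g c', by rw [h', List.map_replicate]⟩
    rcases AkblAux.filter_pair hPnodup (hPmem x) (hPmem y) hxy with hPf | hPf
    · -- the restriction of P is [x, y]
      have hstruct : (restrictWord w x y).map g
          = [false, !false, false, !false]
            ++ (((P.product P).map (fun p => (restrictWord (blk p) x y).map g)).map
                (· ++ [false, !false, false, !false])).flatten := by
        rw [hw, hS]
        simp only [restrictWord, List.filter_append, List.filter_flatten, List.map_map,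
          List.map_append, List.map_flatten, Function.comp_def, hPf]
        simp [hgx, hgy]
      rw [hstruct] at himg
      exact AkblAux.main_bool false hvimg _ hLrep himg
    · have hstruct : (restrictWord w x y).map g
          = [true, !true, true, !true]
            ++ (((P.product P).map (fun p => (restrictWord (blk p) x y).map g)).map
                (· ++ [true, !true, true, !true])).flatten := by
        rw [hw, hS]
        simp only [restrictWord, List.filter_append, List.filter_flatten, List.map_map,
          List.map_append, List.map_flatten, Function.comp_def, hPf]
        simp [hgx, hgy]
      rw [hstruct] at himg
      exact AkblAux.main_bool true hvimg _ hLrep himg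
  · -- restriction avoids pattern → adjacent
    intro hncon
    by_contra hnadj
    apply hncon
    have hpmem : (x, y) ∈ P.product P := List.pair_mem_product.mpr ⟨hPmem x, hPmem y⟩
    have hblkxy : blk (x, y) = List.replicate k x ++ List.replicate l y := by
      rw [hblk]; exact if_pos ⟨hxy, hnadj⟩
    have hinfw : blk (x, y) <:+: w := by
      have h1 : blk (x, y) ++ S ∈ (P.product P).map (fun p => blk p ++ S) :=
        List.mem_map_of_mem hpmem
      have h2 : blk (x, y) ++ S <:+: ((P.product P).map (fun p => blk p ++ S)).flatten :=
        List.infix_of_mem_flatten h1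
      have h3 : blk (x, y) <:+: blk (x, y) ++ S := (List.prefix_append _ _).isInfix
      rw [hw]
      exact (h3.trans h2).trans (List.suffix_append _ _).isInfix
    have hR : blk (x, y) <:+: restrictWord w x y := by
      obtain ⟨s, t, hst⟩ := hinfw
      rw [restrictWord, ← hst, List.filter_append, List.filter_append]
      have hself : (blk (x, y)).filter (fun z => decide (z = x ∨ z = y)) = blk (x, y) := by
        rw [List.filter_eq_self]
        intro a ha
        rw [hblkxy] at ha
        simp only [decide_eq_true_eq]
        rcases List.mem_append.mp ha with h | h
        · exact Or.inl (List.eq_of_mem_replicate h)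
        · exact Or.inr (List.eq_of_mem_replicate h)
      rw [hself]
      exact ⟨_, _, rfl⟩
    refine ⟨x, y, hxy, ?_⟩
    rw [hpw, ← hblkxy]
    exact hR
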